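/- Let B be a unital C*-algebra, A ⊆ B a complex linear subspace, and y ∈ A with ‖y‖ ≤ 1. Then a * y ∈ A for every a ∈ A if and only if for every x ∈ A there exists z ∈ A such that condition C(x, star y, z) holds. -/

import Mathlib

/-- The canonical C*-matrix norm on matrices over a C*-algebra `A`, obtained by viewing an
`m × n` matrix as an operator between the Hilbert C*-modules `A^n` and `A^m` (as in
Mathlib's `CStarMatrix`).  For square matrices this is the unique C*-algebra norm. -/
noncomputable def cstarMatrixNorm {A : Type*} [NonUnitalNormedRing A] [StarRing A]
    {m n : ℕ} (M : Matrix (Fin m) (Fin n) A) : ℝ :=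
  sSup {r : ℝ | ∃ v : Fin n → A, ‖∑ i, star (v i) * v i‖ ≤ 1 ∧
    r = Real.sqrt ‖∑ j, star (M.mulVec v j) * M.mulVec v j‖}

/-- Condition C(x, y, z) of Section 6: for every `b ∈ B`, the 2×4 matrix over `B` with rows
`(0, y, 1, 0)` and `(2·1, x, z, b)` has the same norm as the row matrix `(2·1, x, z, b)`. -/
def CondC {B : Type*} [NormedRing B] [StarRing B] (x y z : B) : Prop :=
  ∀ b : B, cstarMatrixNorm !![0, y, 1, 0; 2, x, z, b] = cstarMatrixNorm !![(2 : B), x, z, b]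

namespace CorSixAux

section Subsingleton

lemma cstarMatrixNorm_of_subsingleton {A : Type*} [NonUnitalNormedRing A] [StarRing A]
    [Subsingleton A] {m n : ℕ} (M : Matrix (Fin m) (Fin n) A) : cstarMatrixNorm M = 0 := by
  have hset : {r : ℝ | ∃ v : Fin n → A, ‖∑ i, star (v i) * v i‖ ≤ 1 ∧
      r = Real.sqrt ‖∑ j, star (M.mulVec v j) * M.mulVec v j‖} = {0} := by
    ext r
    constructor
    · rintro ⟨v, -, rfl⟩
      have h1 : (∑ j, star (M.mulVec v j) * M.mulVec v j) = 0 := Subsingleton.elim _ _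
      simp [h1]
    · rintro rfl
      refine ⟨0, ?_, ?_⟩
      · have h1 : (∑ i : Fin n, star ((0 : Fin n → A) i) * (0 : Fin n → A) i) = 0 :=
          Subsingleton.elim _ _
        simp [h1]
      · have h1 : (∑ j, star (M.mulVec 0 j) * M.mulVec 0 j) = 0 := Subsingleton.elim _ _
        simp [h1]
  rw [cstarMatrixNorm, hset, csSup_singleton]

end Subsingleton

variable {B : Type*} [CStarAlgebra B] [PartialOrder B] [StarOrderedRing B]

lemma sum_star_mul_self_nonneg {n : ℕ} (v : Fin n → B) :
    0 ≤ ∑ i, star (v i) * v i :=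
  Finset.sum_nonneg fun i _ => star_mul_self_nonneg _

/-- The key Cauchy–Schwarz-type estimate: if the rows of `a` are pairwise orthogonal
(`∑ᵢ aⱼᵢ a*ⱼ'ᵢ = 0` for `j ≠ j'`) and each row has `‖∑ᵢ aⱼᵢ a*ⱼᵢ‖ ≤ t`, then
`∑ⱼ (av)ⱼ* (av)ⱼ ≤ t • ∑ᵢ vᵢ* vᵢ`. -/
lemma key_cs {m n : ℕ} (a : Fin m → Fin n → B) (v : Fin n → B) {t : ℝ} (ht : 0 < t)
    (horth : ∀ j j' : Fin m, j ≠ j' → ∑ i, a j i * star (a j' i) = 0)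
    (hrow : ∀ j, ‖∑ i, a j i * star (a j i)‖ ≤ t) :
    ∑ j, star (∑ i, a j i * v i) * (∑ i, a j i * v i) ≤ t • ∑ i, star (v i) * v i := by
  set w : Fin m → B := fun j => ∑ i, a j i * v i with hw
  set p : Fin n → B := fun i => ∑ j, star (a j i) * w j with hp
  set Q : B := ∑ j, star (w j) * w j with hQ
  set V : B := ∑ i, star (v i) * v i with hV
  have hQsa : IsSelfAdjoint Q := by
    rw [hQ, IsSelfAdjoint]
    simp [star_sum, star_mul, star_star]
  -- ∑ᵢ vᵢ* pᵢ = Q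
  have hvp : ∑ i, star (v i) * p i = Q := by
    simp only [hp, Finset.mul_sum]
    rw [Finset.sum_comm]
    refine Finset.sum_congr rfl fun j _ => ?_
    have : ∀ i, star (v i) * (star (a j i) * w j) = (star (a j i * v i)) * w j := by
      intro i; rw [star_mul, mul_assoc]
    simp only [this, ← Finset.sum_mul, ← star_sum]
    rfl
  have hpv : ∑ i, star (p i) * v i = Q := by
    have h1 : ∑ i, star (p i) * v i = star (∑ i, star (v i) * p i) := by
      simp [star_sum, star_mul, star_star]
    rw [h1, hvp, hQsa.star_eq]
  -- ∑ᵢ pᵢ* pᵢ ≤ t • Q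
  have hpp : ∑ i, star (p i) * p i ≤ t • Q := by
    have hstarp : ∀ i, star (p i) = ∑ j, star (w j) * a j i := by
      intro i; simp [hp, star_sum, star_mul, star_star]
    have h1 : ∀ i, star (p i) * p i
        = ∑ j, ∑ j', star (w j) * ((a j i * star (a j' i)) * w j') := by
      intro i
      rw [hstarp i]
      simp only [hp]
      rw [Finset.sum_mul]
      refine Finset.sum_congr rfl fun j _ => ?_
      rw [Finset.mul_sum]
      refine Finset.sum_congr rfl fun j' _ => ?_
      simp [mul_assoc]
    have h2 : ∑ i, star (p i) * p i
        = ∑ j, star (w j) * ((∑ i, a j i * star (a j i)) * w j) := by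
      simp only [h1]
      rw [Finset.sum_comm]
      refine Finset.sum_congr rfl fun j _ => ?_
      rw [Finset.sum_comm]
      rw [Finset.sum_eq_single j]
      · simp only [Finset.mul_sum, Finset.sum_mul]
      · intro j' _ hne
        have : ∀ i, star (w j) * ((a j i * star (a j' i)) * w j')
            = star (w j) * (a j i * star (a j' i)) * w j' := by intro i; simp [mul_assoc]
        simp only [this, ← Finset.sum_mul, ← Finset.mul_sum, horth j j' (Ne.symm hne)]
        simp
      · intro h; exact absurd (Finset.mem_univ j) h
    rw [h2, hQ, Finset.smul_sum]
    refine Finset.sum_le_sum fun j _ => ?_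
    have hAsa : IsSelfAdjoint (∑ i, a j i * star (a j i)) := by
      rw [IsSelfAdjoint]; simp [star_sum, star_mul, star_star]
    calc star (w j) * ((∑ i, a j i * star (a j i)) * w j)
        = star (w j) * (∑ i, a j i * star (a j i)) * w j := by rw [mul_assoc]
      _ ≤ ‖∑ i, a j i * star (a j i)‖ • (star (w j) * w j) :=
          CStarAlgebra.star_left_conjugate_le_norm_smul hAsa
      _ ≤ t • (star (w j) * w j) :=
          smul_le_smul_of_nonneg_right (hrow j) (star_mul_self_nonneg _)
  -- expansion of the positive sum
  have hexp : ∀ i, star (p i - t • v i) * (p i - t • v i)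
      = star (p i) * p i - t • (star (p i) * v i) - t • (star (v i) * p i)
        + (t*t) • (star (v i) * v i) := by
    intro i
    simp [star_sub, star_smul, sub_mul, mul_sub, smul_mul_assoc, mul_smul_comm, smul_smul,
      smul_sub]
    abel
  have h0 : 0 ≤ ∑ i, star (p i - t • v i) * (p i - t • v i) :=
    Finset.sum_nonneg fun i _ => star_mul_self_nonneg _
  have h3 : ∑ i, star (p i - t • v i) * (p i - t • v i)
      = (∑ i, star (p i) * p i) - t • Q - t • Q + (t*t) • V := by
    simp only [hexp]
    rw [Finset.sum_add_distrib, Finset.sum_sub_distrib, Finset.sum_sub_distrib,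
      ← Finset.smul_sum, ← Finset.smul_sum, ← Finset.smul_sum, hvp, hpv, hV]
  rw [h3] at h0
  have h4 : t • Q ≤ (t*t) • V := by
    have h5 : (∑ i, star (p i) * p i) - t • Q - t • Q + (t*t) • V
        ≤ t • Q - t • Q - t • Q + (t*t) • V :=
      add_le_add_left (sub_le_sub_right (sub_le_sub_right hpp _) _) _
    have h6 := le_trans h0 h5
    rw [show t • Q - t • Q - t • Q + (t*t) • V = (t*t) • V - t • Q from by abel] at h6
    exact sub_nonneg.mp h6
  have h7 := smul_le_smul_of_nonneg_left h4 (inv_nonneg.2 ht.le)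
  have h8 : t⁻¹ • (t • Q) = Q := by rw [smul_smul, inv_mul_cancel₀ ht.ne', one_smul]
  have h9 : t⁻¹ • ((t*t) • V) = t • V := by
    rw [smul_smul, ← mul_assoc, inv_mul_cancel₀ ht.ne', one_mul]
  rwa [h8, h9] at h7


/-- Norm bound for images of admissible vectors, with a universal constant; used for
`BddAbove`. -/
lemma norm_mulVec_le_univ {m n : ℕ} (M : Matrix (Fin m) (Fin n) B) (v : Fin n → B)
    (hv : ‖∑ i, star (v i) * v i‖ ≤ 1) :
    ‖∑ j, star (M.mulVec v j) * M.mulVec v j‖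
      ≤ ∑ j, (‖∑ i, M j i * star (M j i)‖ + 1) := by
  have hmv : M.mulVec v = fun j => ∑ i, M j i * v i := rfl
  rw [hmv]
  refine (norm_sum_le _ _).trans (Finset.sum_le_sum fun j _ => ?_)
  have ht : (0:ℝ) < ‖∑ i, M j i * star (M j i)‖ + 1 :=
    lt_of_lt_of_le one_pos (le_add_of_nonneg_left (norm_nonneg _))
  have h1 := key_cs (fun _ : Fin 1 => M j) v ht
    (fun j₁ j₂ hne => absurd (Subsingleton.elim j₁ j₂) hne)
    (fun _ => le_add_of_nonneg_right zero_le_one)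
  rw [Fin.sum_univ_one] at h1
  calc ‖star (∑ i, M j i * v i) * ∑ i, M j i * v i‖
      ≤ ‖(‖∑ i, M j i * star (M j i)‖ + 1) • ∑ i, star (v i) * v i‖ :=
        CStarAlgebra.norm_le_norm_of_nonneg_of_le (star_mul_self_nonneg _) h1
    _ = (‖∑ i, M j i * star (M j i)‖ + 1) * ‖∑ i, star (v i) * v i‖ := by
        rw [norm_smul, Real.norm_of_nonneg ht.le]
    _ ≤ (‖∑ i, M j i * star (M j i)‖ + 1) * 1 := by
        exact mul_le_mul_of_nonneg_left hv ht.le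
    _ = _ := mul_one _

lemma cstarMatrixNorm_le {m n : ℕ} (M : Matrix (Fin m) (Fin n) B) {C : ℝ} (hC : 0 ≤ C)
    (h : ∀ v : Fin n → B, ‖∑ i, star (v i) * v i‖ ≤ 1 →
      ‖∑ j, star (M.mulVec v j) * M.mulVec v j‖ ≤ C) :
    cstarMatrixNorm M ≤ Real.sqrt C := by
  refine Real.sSup_le ?_ (Real.sqrt_nonneg C)
  rintro r ⟨v, hv, rfl⟩
  exact Real.sqrt_le_sqrt (h v hv)

lemma sqrt_le_cstarMatrixNorm {m n : ℕ} (M : Matrix (Fin m) (Fin n) B) (v : Fin n → B)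
    (hv : ‖∑ i, star (v i) * v i‖ ≤ 1) :
    Real.sqrt ‖∑ j, star (M.mulVec v j) * M.mulVec v j‖ ≤ cstarMatrixNorm M := by
  refine le_csSup ⟨Real.sqrt (∑ j, (‖∑ i, M j i * star (M j i)‖ + 1)), ?_⟩ ⟨v, hv, rfl⟩
  rintro r ⟨v', hv', rfl⟩
  exact Real.sqrt_le_sqrt (norm_mulVec_le_univ M v' hv')

section Nontrivial

variable [Nontrivial B]

lemma norm_four : ‖(4:B)‖ = 4 := by
  rw [(map_ofNat (algebraMap ℝ B) 4).symm, norm_algebraMap']; norm_num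

lemma four_nonneg : (0:B) ≤ 4 := by
  have := mul_star_self_nonneg (2:B)
  rw [star_ofNat] at this
  norm_num at this
  convert this using 1
  norm_num

/-- The norm of the row `(2, x, z, b)`. -/
lemma row_norm_eq (x z b : B) :
    cstarMatrixNorm !![(2:B), x, z, b]
      = Real.sqrt ‖(4:B) + x * star x + z * star z + b * star b‖ := by
  set d : B := (4:B) + x * star x + z * star z + b * star b with hd
  have hrowsum : ∑ i, (!![(2:B), x, z, b]) 0 i * star ((!![(2:B), x, z, b]) 0 i) = d := by
    simp [Fin.sum_univ_four, hd]
    norm_num [star_ofNat]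
  have hd0 : 0 ≤ d := by
    rw [← hrowsum]; exact Finset.sum_nonneg fun i _ => mul_star_self_nonneg _
  have hdsa : IsSelfAdjoint d := hd0.isSelfAdjoint
  have h4d : (4:B) ≤ d := by
    rw [hd]
    calc (4:B) = 4 + 0 + 0 + 0 := by simp
    _ ≤ 4 + x * star x + z * star z + b * star b := by
        refine add_le_add (add_le_add (add_le_add le_rfl ?_) ?_) ?_ <;>
          exact mul_star_self_nonneg _
  have hN4 : (4:ℝ) ≤ ‖d‖ := by
    calc (4:ℝ) = ‖(4:B)‖ := norm_four.symm
    _ ≤ ‖d‖ := CStarAlgebra.norm_le_norm_of_nonneg_of_le four_nonneg h4d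
  have hNpos : (0:ℝ) < ‖d‖ := lt_of_lt_of_le (by norm_num) hN4
  have hub : ∀ v : Fin 4 → B, ‖∑ i, star (v i) * v i‖ ≤ 1 →
      ‖∑ j, star ((!![(2:B), x, z, b]).mulVec v j) * (!![(2:B), x, z, b]).mulVec v j‖
        ≤ ‖d‖ := by
    intro v hv
    have hmv : (!![(2:B), x, z, b]).mulVec v = fun j => ∑ i, (!![(2:B), x, z, b]) j i * v i :=
      rfl
    have h1 := key_cs (fun j : Fin 1 => fun i => (!![(2:B), x, z, b]) j i) v hNpos
      (fun j₁ j₂ hne => absurd (Subsingleton.elim j₁ j₂) hne)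
      (fun j => by rw [Subsingleton.elim j 0, hrowsum])
    calc ‖∑ j, star ((!![(2:B), x, z, b]).mulVec v j) * (!![(2:B), x, z, b]).mulVec v j‖
        ≤ ‖‖d‖ • ∑ i, star (v i) * v i‖ := by
          rw [hmv]
          exact CStarAlgebra.norm_le_norm_of_nonneg_of_le
            (Finset.sum_nonneg fun j _ => star_mul_self_nonneg _) h1
      _ = ‖d‖ * ‖∑ i, star (v i) * v i‖ := by rw [norm_smul, Real.norm_of_nonneg hNpos.le]
      _ ≤ ‖d‖ * 1 := mul_le_mul_of_nonneg_left hv hNpos.le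
      _ = ‖d‖ := mul_one _
  refine le_antisymm (cstarMatrixNorm_le _ (norm_nonneg d) hub) ?_
  -- lower bound via the witness vector (row)* / √‖d‖
  set sN : ℝ := Real.sqrt ‖d‖ with hsN
  have hsNpos : 0 < sN := Real.sqrt_pos.mpr hNpos
  have hsNsq : sN⁻¹ * sN⁻¹ = ‖d‖⁻¹ := by
    rw [← mul_inv, Real.mul_self_sqrt hNpos.le]
  set v₀ : Fin 4 → B := fun i => sN⁻¹ • star ((!![(2:B), x, z, b]) 0 i) with hv₀
  have hv₀V : ∑ i, star (v₀ i) * v₀ i = ‖d‖⁻¹ • d := by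
    have h1 : ∑ i, star (v₀ i) * v₀ i
        = ‖d‖⁻¹ • ∑ i, (!![(2:B), x, z, b]) 0 i * star ((!![(2:B), x, z, b]) 0 i) := by
      rw [Finset.smul_sum]
      refine Finset.sum_congr rfl fun i _ => ?_
      simp [hv₀, star_smul, smul_mul_assoc, mul_smul_comm, smul_smul, hsNsq]
    rw [h1, hrowsum]
  have hv₀adm : ‖∑ i, star (v₀ i) * v₀ i‖ ≤ 1 := by
    rw [hv₀V, norm_smul, Real.norm_of_nonneg (inv_nonneg.2 hNpos.le),
      inv_mul_cancel₀ hNpos.ne']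
  have hmv₀ : ∑ j, star ((!![(2:B), x, z, b]).mulVec v₀ j) * (!![(2:B), x, z, b]).mulVec v₀ j
      = ‖d‖⁻¹ • (d * d) := by
    have hmv : (!![(2:B), x, z, b]).mulVec v₀
        = fun j => ∑ i, (!![(2:B), x, z, b]) j i * v₀ i := rfl
    have hw : ∑ i, (!![(2:B), x, z, b]) 0 i * v₀ i = sN⁻¹ • d := by
      have h1 : ∑ i, (!![(2:B), x, z, b]) 0 i * v₀ i
          = sN⁻¹ • ∑ i, (!![(2:B), x, z, b]) 0 i * star ((!![(2:B), x, z, b]) 0 i) := by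
        rw [Finset.smul_sum]
        refine Finset.sum_congr rfl fun i _ => ?_
        simp [hv₀, mul_smul_comm]
      rw [h1, hrowsum]
    simp only [hmv, Fin.sum_univ_one]
    rw [hw]
    simp [star_smul, smul_mul_assoc, mul_smul_comm, smul_smul, hsNsq, hdsa.star_eq]
  have hval : ‖‖d‖⁻¹ • (d * d)‖ = ‖d‖ := by
    have hdd : ‖d * d‖ = ‖d‖ * ‖d‖ := by
      conv_lhs => rw [show d * d = d * star d from by rw [hdsa.star_eq]]
      exact CStarRing.norm_self_mul_star
    rw [norm_smul, Real.norm_of_nonneg (inv_nonneg.2 hNpos.le), hdd, ← mul_assoc,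
      inv_mul_cancel₀ hNpos.ne', one_mul]
  have := sqrt_le_cstarMatrixNorm !![(2:B), x, z, b] v₀ hv₀adm
  rwa [hmv₀, hval] at this


/-- Easy direction: if `z = -(x*y)` then the two-row matrix has the same norm as the row. -/
lemma condC_of_eq (x y z : B) (hy1 : ‖y‖ ≤ 1) (hz : z = -(x * y)) : CondC x (star y) z := by
  intro b
  set M : Matrix (Fin 2) (Fin 4) B := !![0, star y, 1, 0; 2, x, z, b] with hM
  set d : B := (4:B) + x * star x + z * star z + b * star b with hd
  -- row products
  have hrow1 : ∑ i, M 1 i * star (M 1 i) = d := by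
    simp [hM, Fin.sum_univ_four, hd]
    norm_num [star_ofNat]
  have hrow0 : ∑ i, M 0 i * star (M 0 i) = star y * y + 1 := by
    simp [hM, Fin.sum_univ_four]
  have horth01 : ∑ i, M 0 i * star (M 1 i) = 0 := by
    have : star y * star x + star z = 0 := by
      rw [hz, star_neg, star_mul]; abel
    simp [hM, Fin.sum_univ_four]
    rw [← this]
  have horth10 : ∑ i, M 1 i * star (M 0 i) = 0 := by
    have : x * y + z = 0 := by rw [hz]; abel
    simp [hM, Fin.sum_univ_four]
    rw [← this]
  have hrowsum : ∑ i, (!![(2:B), x, z, b]) 0 i * star ((!![(2:B), x, z, b]) 0 i) = d := by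
    simp [Fin.sum_univ_four, hd]
    norm_num [star_ofNat]
  have hd0 : 0 ≤ d := by
    rw [← hrowsum]; exact Finset.sum_nonneg fun i _ => mul_star_self_nonneg _
  have hdsa : IsSelfAdjoint d := hd0.isSelfAdjoint
  have h4d : (4:B) ≤ d := by
    rw [hd]
    calc (4:B) = 4 + 0 + 0 + 0 := by simp
    _ ≤ 4 + x * star x + z * star z + b * star b := by
        refine add_le_add (add_le_add (add_le_add le_rfl ?_) ?_) ?_ <;>
          exact mul_star_self_nonneg _
  have hN4 : (4:ℝ) ≤ ‖d‖ := by
    calc (4:ℝ) = ‖(4:B)‖ := norm_four.symm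
    _ ≤ ‖d‖ := CStarAlgebra.norm_le_norm_of_nonneg_of_le four_nonneg h4d
  have hNpos : (0:ℝ) < ‖d‖ := lt_of_lt_of_le (by norm_num) hN4
  have hrow0norm : ‖∑ i, M 0 i * star (M 0 i)‖ ≤ ‖d‖ := by
    rw [hrow0]
    calc ‖star y * y + 1‖ ≤ ‖star y * y‖ + ‖(1:B)‖ := norm_add_le _ _
    _ ≤ 1 + 1 := by
        rw [CStarRing.norm_star_mul_self, norm_one]
        exact add_le_add (mul_le_one₀ hy1 (norm_nonneg y) hy1) le_rfl
    _ ≤ ‖d‖ := by linarith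
  -- upper bound for M
  have hub : ∀ v : Fin 4 → B, ‖∑ i, star (v i) * v i‖ ≤ 1 →
      ‖∑ j, star (M.mulVec v j) * M.mulVec v j‖ ≤ ‖d‖ := by
    intro v hv
    have hmv : M.mulVec v = fun j => ∑ i, M j i * v i := rfl
    have h1 := key_cs (fun j : Fin 2 => fun i => M j i) v hNpos
      (fun j₁ j₂ hne => by
        fin_cases j₁ <;> fin_cases j₂
        · exact absurd rfl hne
        · exact horth01
        · exact horth10
        · exact absurd rfl hne)
      (fun j => by
        fin_cases j
        · exact hrow0norm
        · exact le_of_eq (congrArg norm hrow1))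
    calc ‖∑ j, star (M.mulVec v j) * M.mulVec v j‖
        ≤ ‖‖d‖ • ∑ i, star (v i) * v i‖ := by
          rw [hmv]
          exact CStarAlgebra.norm_le_norm_of_nonneg_of_le
            (Finset.sum_nonneg fun j _ => star_mul_self_nonneg _) h1
      _ = ‖d‖ * ‖∑ i, star (v i) * v i‖ := by rw [norm_smul, Real.norm_of_nonneg hNpos.le]
      _ ≤ ‖d‖ * 1 := mul_le_mul_of_nonneg_left hv hNpos.le
      _ = ‖d‖ := mul_one _
  -- witness
  set sN : ℝ := Real.sqrt ‖d‖ with hsN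
  have hsNpos : 0 < sN := Real.sqrt_pos.mpr hNpos
  have hsNsq : sN⁻¹ * sN⁻¹ = ‖d‖⁻¹ := by
    rw [← mul_inv, Real.mul_self_sqrt hNpos.le]
  set v₀ : Fin 4 → B := fun i => sN⁻¹ • star (M 1 i) with hv₀
  have hv₀V : ∑ i, star (v₀ i) * v₀ i = ‖d‖⁻¹ • d := by
    have h1 : ∑ i, star (v₀ i) * v₀ i = ‖d‖⁻¹ • ∑ i, M 1 i * star (M 1 i) := by
      rw [Finset.smul_sum]
      refine Finset.sum_congr rfl fun i _ => ?_
      simp [hv₀, star_smul, smul_mul_assoc, mul_smul_comm, smul_smul, hsNsq]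
    rw [h1, hrow1]
  have hv₀adm : ‖∑ i, star (v₀ i) * v₀ i‖ ≤ 1 := by
    rw [hv₀V, norm_smul, Real.norm_of_nonneg (inv_nonneg.2 hNpos.le),
      inv_mul_cancel₀ hNpos.ne']
  have hw0 : ∑ i, M 0 i * v₀ i = 0 := by
    have h1 : ∑ i, M 0 i * v₀ i = sN⁻¹ • ∑ i, M 0 i * star (M 1 i) := by
      rw [Finset.smul_sum]
      refine Finset.sum_congr rfl fun i _ => ?_
      simp [hv₀, mul_smul_comm]
    rw [h1, horth01, smul_zero]
  have hw1 : ∑ i, M 1 i * v₀ i = sN⁻¹ • d := by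
    have h1 : ∑ i, M 1 i * v₀ i = sN⁻¹ • ∑ i, M 1 i * star (M 1 i) := by
      rw [Finset.smul_sum]
      refine Finset.sum_congr rfl fun i _ => ?_
      simp [hv₀, mul_smul_comm]
    rw [h1, hrow1]
  have hmv₀ : ∑ j, star (M.mulVec v₀ j) * M.mulVec v₀ j = ‖d‖⁻¹ • (d * d) := by
    have hmv : M.mulVec v₀ = fun j => ∑ i, M j i * v₀ i := rfl
    simp only [hmv, Fin.sum_univ_two]
    rw [hw0, hw1]
    simp [star_smul, smul_mul_assoc, mul_smul_comm, smul_smul, hsNsq, hdsa.star_eq]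
  have hval : ‖‖d‖⁻¹ • (d * d)‖ = ‖d‖ := by
    have hdd : ‖d * d‖ = ‖d‖ * ‖d‖ := by
      conv_lhs => rw [show d * d = d * star d from by rw [hdsa.star_eq]]
      exact CStarRing.norm_self_mul_star
    rw [norm_smul, Real.norm_of_nonneg (inv_nonneg.2 hNpos.le), hdd, ← mul_assoc,
      inv_mul_cancel₀ hNpos.ne', one_mul]
  have hle : cstarMatrixNorm M ≤ Real.sqrt ‖d‖ := cstarMatrixNorm_le _ (norm_nonneg d) hub
  have hge : Real.sqrt ‖d‖ ≤ cstarMatrixNorm M := by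
    have := sqrt_le_cstarMatrixNorm M v₀ hv₀adm
    rwa [hmv₀, hval] at this
  rw [hM] at hle hge
  rw [le_antisymm hle hge, row_norm_eq, hd]

/-- Hard direction: condition C forces `x * y = -z`. -/
lemma eq_of_condC (x y z : B) (h : CondC x (star y) z) : x * y = -z := by
  set d₀ : B := (4:B) + x * star x + z * star z with hd₀
  have hd₀0 : 0 ≤ d₀ := by
    rw [hd₀]
    have h1 : (0:B) = 0 + 0 + 0 := by simp
    rw [h1]
    refine add_le_add (add_le_add four_nonneg ?_) ?_ <;> exact mul_star_self_nonneg _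
  have hd₀sa : IsSelfAdjoint d₀ := hd₀0.isSelfAdjoint
  set R : ℝ := ‖d₀‖ with hR
  have h4d₀ : (4:B) ≤ d₀ := by
    rw [hd₀]
    calc (4:B) = 4 + 0 + 0 := by simp
    _ ≤ 4 + x * star x + z * star z := by
        refine add_le_add (add_le_add le_rfl ?_) ?_ <;> exact mul_star_self_nonneg _
  have hR4 : (4:ℝ) ≤ R := by
    calc (4:ℝ) = ‖(4:B)‖ := norm_four.symm
    _ ≤ R := CStarAlgebra.norm_le_norm_of_nonneg_of_le four_nonneg h4d₀
  have hRpos : (0:ℝ) < R := lt_of_lt_of_le (by norm_num) hR4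
  have harg : 0 ≤ algebraMap ℝ B R - d₀ := sub_nonneg.mpr hd₀sa.le_algebraMap_norm_self
  set b₀ : B := CFC.sqrt (algebraMap ℝ B R - d₀) with hb₀def
  have hb₀0 : 0 ≤ b₀ := CFC.sqrt_nonneg _
  have hb₀sa : IsSelfAdjoint b₀ := hb₀0.isSelfAdjoint
  have hbb : b₀ * star b₀ = algebraMap ℝ B R - d₀ := by
    rw [hb₀sa.star_eq, ← sq, hb₀def, CFC.sq_sqrt _ harg]
  have hdR : (4:B) + x * star x + z * star z + b₀ * star b₀ = algebraMap ℝ B R := by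
    rw [hbb, ← hd₀]; abel
  have hNR : ‖(4:B) + x * star x + z * star z + b₀ * star b₀‖ = R := by
    rw [hdR, norm_algebraMap', Real.norm_of_nonneg hRpos.le]
  -- condition C at b₀
  have hcond := h b₀
  have hrowval : cstarMatrixNorm !![(2:B), x, z, b₀] = Real.sqrt R := by
    rw [row_norm_eq, hNR]
  set M : Matrix (Fin 2) (Fin 4) B := !![0, star y, 1, 0; 2, x, z, b₀] with hM
  have hMval : cstarMatrixNorm M ≤ Real.sqrt R := by
    rw [hM, hcond, hrowval]
  -- witness vector
  have hrowsum : ∑ i, M 1 i * star (M 1 i) = algebraMap ℝ B R := by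
    rw [← hdR]
    simp [hM, Fin.sum_univ_four]
    norm_num [star_ofNat]
  have horthsum : ∑ i, M 0 i * star (M 1 i) = star y * star x + star z := by
    simp [hM, Fin.sum_univ_four]
  set e : B := star y * star x + star z with he
  set sN : ℝ := Real.sqrt R with hsN
  have hsNpos : 0 < sN := Real.sqrt_pos.mpr hRpos
  have hsNsq : sN⁻¹ * sN⁻¹ = R⁻¹ := by
    rw [← mul_inv, Real.mul_self_sqrt hRpos.le]
  set v₀ : Fin 4 → B := fun i => sN⁻¹ • star (M 1 i) with hv₀
  have hv₀adm : ‖∑ i, star (v₀ i) * v₀ i‖ ≤ 1 := by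
    have h1 : ∑ i, star (v₀ i) * v₀ i = R⁻¹ • ∑ i, M 1 i * star (M 1 i) := by
      rw [Finset.smul_sum]
      refine Finset.sum_congr rfl fun i _ => ?_
      simp [hv₀, star_smul, smul_mul_assoc, mul_smul_comm, smul_smul, hsNsq]
    rw [h1, hrowsum, norm_smul, norm_algebraMap', Real.norm_of_nonneg (inv_nonneg.2 hRpos.le),
      Real.norm_of_nonneg hRpos.le, inv_mul_cancel₀ hRpos.ne']
  have hw0 : ∑ i, M 0 i * v₀ i = sN⁻¹ • e := by
    have h1 : ∑ i, M 0 i * v₀ i = sN⁻¹ • ∑ i, M 0 i * star (M 1 i) := by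
      rw [Finset.smul_sum]
      refine Finset.sum_congr rfl fun i _ => ?_
      simp [hv₀, mul_smul_comm]
    rw [h1, horthsum, he]
  have hw1 : ∑ i, M 1 i * v₀ i = sN⁻¹ • algebraMap ℝ B R := by
    have h1 : ∑ i, M 1 i * v₀ i = sN⁻¹ • ∑ i, M 1 i * star (M 1 i) := by
      rw [Finset.smul_sum]
      refine Finset.sum_congr rfl fun i _ => ?_
      simp [hv₀, mul_smul_comm]
    rw [h1, hrowsum]
  set q : B := R⁻¹ • (star e * e) + algebraMap ℝ B R with hq
  have hmv₀ : ∑ j, star (M.mulVec v₀ j) * M.mulVec v₀ j = q := by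
    have hmv : M.mulVec v₀ = fun j => ∑ i, M j i * v₀ i := rfl
    simp only [hmv, Fin.sum_univ_two]
    rw [hw0, hw1, hq]
    have hA : star (sN⁻¹ • e) * (sN⁻¹ • e) = R⁻¹ • (star e * e) := by
      simp [star_smul, smul_mul_assoc, mul_smul_comm, smul_smul, hsNsq]
    have hBmap : star (sN⁻¹ • algebraMap ℝ B R) * (sN⁻¹ • algebraMap ℝ B R)
        = algebraMap ℝ B R := by
      have hmapsa : star (algebraMap ℝ B R) = algebraMap ℝ B R := by
        rw [Algebra.algebraMap_eq_smul_one, star_smul, star_trivial, star_one]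
      rw [star_smul, hmapsa, smul_mul_assoc, mul_smul_comm, smul_smul, star_trivial,
        hsNsq, ← map_mul, Algebra.smul_def, ← map_mul]
      congr 1
      field_simp
    rw [hA, hBmap]
  have hq0 : 0 ≤ q := by
    rw [← hmv₀]; exact Finset.sum_nonneg fun j _ => star_mul_self_nonneg _
  have hqn : ‖q‖ ≤ R := by
    have h1 := sqrt_le_cstarMatrixNorm M v₀ hv₀adm
    rw [hmv₀] at h1
    have h2 : Real.sqrt ‖q‖ ≤ Real.sqrt R := le_trans h1 hMval
    calc ‖q‖ = Real.sqrt ‖q‖ ^ 2 := (Real.sq_sqrt (norm_nonneg q)).symm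
    _ ≤ Real.sqrt R ^ 2 := by
        exact pow_le_pow_left₀ (Real.sqrt_nonneg _) h2 2
    _ = R := Real.sq_sqrt hRpos.le
  have hqle : q ≤ algebraMap ℝ B R := by
    calc q ≤ algebraMap ℝ B ‖q‖ := hq0.isSelfAdjoint.le_algebraMap_norm_self
    _ ≤ algebraMap ℝ B R := by
        rw [← sub_nonneg, ← map_sub, Algebra.algebraMap_eq_smul_one]
        exact smul_nonneg (by linarith) zero_le_one
  have hee : star e * e = 0 := by
    have h1 : R⁻¹ • (star e * e) ≤ 0 := by
      have h2 := sub_le_sub_right hqle (algebraMap ℝ B R)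
      rw [hq] at h2
      simpa using h2
    have h2 : (0:B) ≤ R⁻¹ • (star e * e) :=
      smul_nonneg (inv_nonneg.2 hRpos.le) (star_mul_self_nonneg e)
    have h3 : R⁻¹ • (star e * e) = 0 := le_antisymm h1 h2
    have h4 := congrArg (fun u : B => R • u) h3
    simpa [smul_smul, mul_inv_cancel₀ hRpos.ne'] using h4
  have he0 : e = 0 := (CStarRing.star_mul_self_eq_zero_iff e).mp hee
  have h5 : x * y + z = 0 := by
    have h6 := congrArg star he0
    rw [he] at h6
    simpa [star_add, star_mul, star_star] using h6
  exact eq_neg_of_add_eq_zero_left h5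

end Nontrivial

end CorSixAux

/-- Corollary 6.2 (2): for a contraction `y ∈ A`, `A y ⊆ A` iff for every `x ∈ A`
there is `z ∈ A` with `C(x, y*, z)`. -/
theorem right_mult_iff {B : Type*} [CStarAlgebra B] (A : Submodule ℂ B) (y : B)
    (hy : y ∈ A) (hy1 : ‖y‖ ≤ 1) :
    (∀ a ∈ A, a * y ∈ A) ↔ (∀ x ∈ A, ∃ z ∈ A, CondC x (star y) z) := by
  rcases subsingleton_or_nontrivial B with hB | hB
  · constructor
    · intro _ x _
      refine ⟨0, A.zero_mem, fun b => ?_⟩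
      rw [CorSixAux.cstarMatrixNorm_of_subsingleton, CorSixAux.cstarMatrixNorm_of_subsingleton]
    · intro _ a _
      have h0 : a * y = 0 := Subsingleton.elim _ _
      rw [h0]; exact A.zero_mem
  · letI : PartialOrder B := CStarAlgebra.spectralOrder B
    haveI : StarOrderedRing B := CStarAlgebra.spectralOrderedRing B
    constructor
    · intro h x hx
      exact ⟨-(x * y), A.neg_mem (h x hx), CorSixAux.condC_of_eq x y (-(x * y)) hy1 rfl⟩
    · intro h a ha
      obtain ⟨z, hzA, hC⟩ := h a ha
      have := CorSixAux.eq_of_condC a y z hC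
      rw [this]
      exact A.neg_mem hzA
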